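/- Let v_R(X) = V_R(R − √(|x'|² + (x_n − R)²), z) where V_R(t,z) = U(t,z)((n−1)t/R + 1). There exists R₀ (depending on n, α) such that for all R ≥ R₀, Δ v_R + β (∂_z v_R)/z ≥ 0 on B₂ ∖ {z = 0} wherever v_R > 0; i.e., v_R is a subsolution of the weighted equation. The required inequality reduces to R ≥ 2t + (n−1)² t + ((n−1)/α) r where t = R − ρ, ρ = √(|x'|² + (x_n−R)²), r = √(t² + z²), using ∂_t U = αU/r. -/

import Mathlib

noncomputable def hh (t z : ℝ) : ℝ :=
  Real.sqrt (Real.sqrt (t ^ 2 + z ^ 2)) * Real.cos (Complex.arg (t + z * Complex.I) / 2)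

noncomputable def UU (α t z : ℝ) : ℝ := hh t z ^ (2 * α)

/-- `V_R(t,z) = U(t,z)((n-1)t/R + 1)` with `n = m+1`. -/
noncomputable def VV (α : ℝ) (n : ℕ) (R t z : ℝ) : ℝ :=
  UU α t z * (((n : ℝ) - 1) * t / R + 1)

/-- The rotated subsolution `v_R(X) = V_R(R - √(|x'|² + (x_n - R)²), z)`,
where `X = (x', x_n, z) ∈ ℝ^{m} × ℝ × ℝ` (so the ambient dimension is `n+1 = m+2`). -/
noncomputable def vR (α : ℝ) (m : ℕ) (R : ℝ) (p : (Fin m → ℝ) × ℝ × ℝ) : ℝ :=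
  VV α (m + 1) R (R - Real.sqrt ((∑ i, p.1 i ^ 2) + (p.2.1 - R) ^ 2)) p.2.2

variable {m : ℕ}

noncomputable def qxx (g : (Fin m → ℝ) × ℝ × ℝ → ℝ) (i : Fin m)
    (p : (Fin m → ℝ) × ℝ × ℝ) : ℝ :=
  deriv (fun s => deriv (fun u => g (Function.update p.1 i u, p.2.1, p.2.2)) s) (p.1 i)

noncomputable def qnn (g : (Fin m → ℝ) × ℝ × ℝ → ℝ) (p : (Fin m → ℝ) × ℝ × ℝ) : ℝ :=
  deriv (fun s => deriv (fun u => g (p.1, u, p.2.2)) s) p.2.1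

noncomputable def qz (g : (Fin m → ℝ) × ℝ × ℝ → ℝ) (p : (Fin m → ℝ) × ℝ × ℝ) : ℝ :=
  deriv (fun s => g (p.1, p.2.1, s)) p.2.2

noncomputable def qzz (g : (Fin m → ℝ) × ℝ × ℝ → ℝ) (p : (Fin m → ℝ) × ℝ × ℝ) : ℝ :=
  deriv (fun s => deriv (fun u => g (p.1, p.2.1, u)) s) p.2.2

/-! ### Auxiliary lemmas -/

section Aux

lemma hh_eq (t z : ℝ) : hh t z = Real.sqrt ((Real.sqrt (t ^ 2 + z ^ 2) + t) / 2) := by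
  have habs : ‖(t + z * Complex.I : ℂ)‖ = Real.sqrt (t ^ 2 + z ^ 2) := by
    rw [Complex.norm_def, Complex.normSq_add_mul_I]
  by_cases hw : (t + z * Complex.I : ℂ) = 0
  · have ht : t = 0 ∧ z = 0 := by
      constructor <;> [simpa using congrArg Complex.re hw; simpa using congrArg Complex.im hw]
    simp [hh, ht.1, ht.2]
  · have h1 : Real.cos (Complex.arg (t + z * Complex.I) / 2)
        = Real.sqrt ((1 + Real.cos (Complex.arg (t + z * Complex.I))) / 2) :=
      Real.cos_half (le_of_lt (Complex.neg_pi_lt_arg _)) (Complex.arg_le_pi _)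
    have h2 : Real.cos (Complex.arg (t + z * Complex.I))
        = t / Real.sqrt (t ^ 2 + z ^ 2) := by
      rw [Complex.cos_arg hw, habs]; simp
    have hr : (0:ℝ) < Real.sqrt (t ^ 2 + z ^ 2) := by
      rw [← habs]
      exact (norm_pos_iff.mpr hw)
    rw [hh, h1, h2, ← Real.sqrt_mul (Real.sqrt_nonneg _)]
    congr 1
    field_simp

lemma abs_le_sqrt_sq_add_sq (t z : ℝ) : |t| ≤ Real.sqrt (t ^ 2 + z ^ 2) := by
  rw [← Real.sqrt_sq_eq_abs]
  exact Real.sqrt_le_sqrt (by nlinarith [sq_nonneg z])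

lemma q_nonneg (t z : ℝ) : 0 ≤ (Real.sqrt (t ^ 2 + z ^ 2) + t) / 2 := by
  have := abs_le_sqrt_sq_add_sq t z
  have := neg_abs_le t
  linarith

lemma q_pos {z : ℝ} (t : ℝ) (hz : z ≠ 0) : 0 < (Real.sqrt (t ^ 2 + z ^ 2) + t) / 2 := by
  have h : |t| < Real.sqrt (t ^ 2 + z ^ 2) := by
    rw [← Real.sqrt_sq_eq_abs]
    apply Real.sqrt_lt_sqrt (sq_nonneg t)
    nlinarith [sq_nonneg z, sq_abs z, abs_pos.2 hz]
  have := neg_abs_le t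
  linarith

lemma r_pos {z : ℝ} (t : ℝ) (hz : z ≠ 0) : 0 < Real.sqrt (t ^ 2 + z ^ 2) := by
  have h1 := q_pos t hz
  have h2 := abs_le_sqrt_sq_add_sq t z
  nlinarith [neg_abs_le t, le_abs_self t]

lemma sq_add_sq_pos {z : ℝ} (t : ℝ) (hz : z ≠ 0) : 0 < t ^ 2 + z ^ 2 := by
  nlinarith [sq_nonneg t, sq_abs z, abs_pos.2 hz]

lemma q_pos' {z : ℝ} (t : ℝ) (hz : z ≠ 0) : 0 < Real.sqrt (t ^ 2 + z ^ 2) + t := by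
  have := q_pos t hz; linarith

lemma UU_eq (α t z : ℝ) :
    UU α t z = ((Real.sqrt (t ^ 2 + z ^ 2) + t) / 2) ^ α := by
  rw [UU, hh_eq, Real.sqrt_eq_rpow, ← Real.rpow_mul (q_nonneg t z)]
  rw [show (1 / 2 * (2 * α)) = α by ring]

/-! ### one-dimensional derivative computations -/

noncomputable def W0f (α c R z t : ℝ) : ℝ :=
  ((Real.sqrt (t ^ 2 + z ^ 2) + t) / 2) ^ α * (c * t / R + 1)

noncomputable def W1f (α c R z t : ℝ) : ℝ :=
  ((Real.sqrt (t ^ 2 + z ^ 2) + t) / 2) ^ α *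
    (α * (c * t / R + 1) / Real.sqrt (t ^ 2 + z ^ 2) + c / R)

noncomputable def W2f (α c R z t : ℝ) : ℝ :=
  ((Real.sqrt (t ^ 2 + z ^ 2) + t) / 2) ^ α *
    (α ^ 2 * (c * t / R + 1) / Real.sqrt (t ^ 2 + z ^ 2) ^ 2
      - α * t * (c * t / R + 1) / Real.sqrt (t ^ 2 + z ^ 2) ^ 3
      + 2 * α * c / (Real.sqrt (t ^ 2 + z ^ 2) * R))

noncomputable def Z1f (α c R t z : ℝ) : ℝ :=
  α * ((Real.sqrt (t ^ 2 + z ^ 2) + t) / 2) ^ (α - 1) *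
    (z / (2 * Real.sqrt (t ^ 2 + z ^ 2))) * (c * t / R + 1)

noncomputable def Z2f (α c R t z : ℝ) : ℝ :=
  (c * t / R + 1) *
    (α * (α - 1) * ((Real.sqrt (t ^ 2 + z ^ 2) + t) / 2) ^ (α - 2) *
        z ^ 2 / (4 * Real.sqrt (t ^ 2 + z ^ 2) ^ 2)
      + α * ((Real.sqrt (t ^ 2 + z ^ 2) + t) / 2) ^ (α - 1) *
        (Real.sqrt (t ^ 2 + z ^ 2) ^ 2 - z ^ 2) /
          (2 * Real.sqrt (t ^ 2 + z ^ 2) ^ 3))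

lemma hasDerivAt_rc (A u : ℝ) (h : A + u ^ 2 ≠ 0) :
    HasDerivAt (fun v : ℝ => Real.sqrt (A + v ^ 2))
      (u / Real.sqrt (A + u ^ 2)) u := by
  have h1 : HasDerivAt (fun v : ℝ => A + v ^ 2) (2 * u) u := by
    simpa using ((hasDerivAt_pow 2 u).const_add A)
  have h2 := (Real.hasDerivAt_sqrt h).comp u h1
  refine h2.congr_deriv ?_
  symm
  rw [mul_comm]
  field_simp

lemma hasDerivAt_r (z t : ℝ) (h : t ^ 2 + z ^ 2 ≠ 0) :
    HasDerivAt (fun s : ℝ => Real.sqrt (s ^ 2 + z ^ 2))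
      (t / Real.sqrt (t ^ 2 + z ^ 2)) t := by
  have h1 : HasDerivAt (fun s : ℝ => s ^ 2 + z ^ 2) (2 * t) t := by
    simpa using (hasDerivAt_pow 2 t).add_const (z ^ 2)
  have h2 := (Real.hasDerivAt_sqrt h).comp t h1
  refine h2.congr_deriv ?_
  symm
  rw [mul_comm]
  field_simp

section W
variable (α c R z t : ℝ)

lemma hasDerivAt_W0 (hR : R ≠ 0) {z t : ℝ}
    (hr : 0 < Real.sqrt (t ^ 2 + z ^ 2))
    (hq : 0 < Real.sqrt (t ^ 2 + z ^ 2) + t)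
    (hne : t ^ 2 + z ^ 2 ≠ 0) :
    HasDerivAt (fun s => W0f α c R z s) (W1f α c R z t) t := by
  simp only [W0f, W1f]
  have hq2 : ((Real.sqrt (t ^ 2 + z ^ 2) + t) / 2) ≠ 0 := by positivity
  have h1 : HasDerivAt (fun s : ℝ => (Real.sqrt (s ^ 2 + z ^ 2) + s) / 2)
      ((t / Real.sqrt (t ^ 2 + z ^ 2) + 1) / 2) t :=
    ((hasDerivAt_r z t hne).add (hasDerivAt_id t)).div_const 2
  have h2 : HasDerivAt (fun x : ℝ => x ^ α)
      (α * ((Real.sqrt (t ^ 2 + z ^ 2) + t) / 2) ^ (α - 1))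
      ((Real.sqrt (t ^ 2 + z ^ 2) + t) / 2) :=
    Real.hasDerivAt_rpow_const (Or.inl hq2)
  have h3 := h2.comp t h1
  have h4 : HasDerivAt (fun s : ℝ => c * s / R + 1) (c / R) t := by
    simpa using (((hasDerivAt_id t).const_mul c).div_const R).add_const 1
  have h5 := h3.mul h4
  refine h5.congr_deriv ?_
  symm
  simp only [Function.comp_apply]
  rw [Real.rpow_sub_one hq2]
  set r := Real.sqrt (t ^ 2 + z ^ 2) with hrdef
  field_simp
  ring

lemma hasDerivAt_W1 (hR : R ≠ 0) {z t : ℝ}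
    (hr : 0 < Real.sqrt (t ^ 2 + z ^ 2))
    (hq : 0 < Real.sqrt (t ^ 2 + z ^ 2) + t)
    (hne : t ^ 2 + z ^ 2 ≠ 0) :
    HasDerivAt (fun s => W1f α c R z s) (W2f α c R z t) t := by
  simp only [W1f, W2f]
  have hq2 : ((Real.sqrt (t ^ 2 + z ^ 2) + t) / 2) ≠ 0 := by positivity
  have h1 : HasDerivAt (fun s : ℝ => (Real.sqrt (s ^ 2 + z ^ 2) + s) / 2)
      ((t / Real.sqrt (t ^ 2 + z ^ 2) + 1) / 2) t :=
    ((hasDerivAt_r z t hne).add (hasDerivAt_id t)).div_const 2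
  have h3 := (Real.hasDerivAt_rpow_const (Or.inl hq2) (p := α)).comp t h1
  have h4 : HasDerivAt (fun s : ℝ => α * (c * s / R + 1)) (α * (c / R)) t := by
    simpa using ((((hasDerivAt_id t).const_mul c).div_const R).add_const 1).const_mul α
  have h5 : HasDerivAt (fun s : ℝ =>
      α * (c * s / R + 1) / Real.sqrt (s ^ 2 + z ^ 2) + c / R)
      ((α * (c / R) * Real.sqrt (t ^ 2 + z ^ 2)
        - α * (c * t / R + 1) * (t / Real.sqrt (t ^ 2 + z ^ 2)))
        / Real.sqrt (t ^ 2 + z ^ 2) ^ 2) t :=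
    ((h4.div (hasDerivAt_r z t hne) hr.ne')).add_const (c / R)
  have h6 := h3.mul h5
  refine h6.congr_deriv ?_
  symm
  simp only [Function.comp_apply]
  rw [Real.rpow_sub_one hq2]
  set r := Real.sqrt (t ^ 2 + z ^ 2) with hrdef
  field_simp
  ring

lemma hasDerivAt_Z0 {z : ℝ} (t : ℝ)
    (hr : 0 < Real.sqrt (t ^ 2 + z ^ 2))
    (hq : 0 < Real.sqrt (t ^ 2 + z ^ 2) + t)
    (hne : t ^ 2 + z ^ 2 ≠ 0) :
    HasDerivAt (fun b => ((Real.sqrt (t ^ 2 + b ^ 2) + t) / 2) ^ α * (c * t / R + 1))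
      (Z1f α c R t z) z := by
  simp only [Z1f]
  have hq2 : ((Real.sqrt (t ^ 2 + z ^ 2) + t) / 2) ≠ 0 := by positivity
  have h1 : HasDerivAt (fun b : ℝ => (Real.sqrt (t ^ 2 + b ^ 2) + t) / 2)
      ((z / Real.sqrt (t ^ 2 + z ^ 2)) / 2) z :=
    ((hasDerivAt_rc (t ^ 2) z hne).add_const t).div_const 2
  have h3 := (Real.hasDerivAt_rpow_const (Or.inl hq2) (p := α)).comp z h1
  have h4 := h3.mul_const (c * t / R + 1)
  refine h4.congr_deriv ?_
  symm
  ring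

lemma hasDerivAt_Z1 {z : ℝ} (t : ℝ)
    (hr : 0 < Real.sqrt (t ^ 2 + z ^ 2))
    (hq : 0 < Real.sqrt (t ^ 2 + z ^ 2) + t)
    (hne : t ^ 2 + z ^ 2 ≠ 0) :
    HasDerivAt (fun b => α * ((Real.sqrt (t ^ 2 + b ^ 2) + t) / 2) ^ (α - 1) *
        (b / (2 * Real.sqrt (t ^ 2 + b ^ 2))) * (c * t / R + 1))
      (Z2f α c R t z) z := by
  simp only [Z2f]
  have hq2 : ((Real.sqrt (t ^ 2 + z ^ 2) + t) / 2) ≠ 0 := by positivity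
  have h1 : HasDerivAt (fun b : ℝ => (Real.sqrt (t ^ 2 + b ^ 2) + t) / 2)
      ((z / Real.sqrt (t ^ 2 + z ^ 2)) / 2) z :=
    ((hasDerivAt_rc (t ^ 2) z hne).add_const t).div_const 2
  have hA := ((Real.hasDerivAt_rpow_const (Or.inl hq2) (p := α - 1)).comp z h1).const_mul α
  have hB : HasDerivAt (fun b : ℝ => b / (2 * Real.sqrt (t ^ 2 + b ^ 2)))
      ((1 * (2 * Real.sqrt (t ^ 2 + z ^ 2)) -
        z * (2 * (z / Real.sqrt (t ^ 2 + z ^ 2)))) /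
          (2 * Real.sqrt (t ^ 2 + z ^ 2)) ^ 2) z :=
    (hasDerivAt_id z).div ((hasDerivAt_rc (t ^ 2) z hne).const_mul 2)
      (by positivity)
  have hB' : HasDerivAt (fun b : ℝ => b / (2 * Real.sqrt (t ^ 2 + b ^ 2)))
      ((Real.sqrt (t ^ 2 + z ^ 2) ^ 2 - z ^ 2) /
        (2 * Real.sqrt (t ^ 2 + z ^ 2) ^ 3)) z := by
    convert hB using 1
    set r := Real.sqrt (t ^ 2 + z ^ 2) with hrdef
    field_simp
  have h5 := (hA.mul hB').mul_const (c * t / R + 1)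
  have he : α - 1 - 1 = α - 2 := by ring
  rw [he] at h5
  refine h5.congr_deriv ?_
  symm
  simp only [Function.comp_apply]
  ring

/-! ### spatial composition -/

lemma hasDerivAt_X0 {A u : ℝ} (hR : R ≠ 0) (hz : z ≠ 0) (hA : 0 < A + u ^ 2) :
    HasDerivAt (fun v => W0f α c R z (R - Real.sqrt (A + v ^ 2)))
      (W1f α c R z (R - Real.sqrt (A + u ^ 2)) *
        (-(u / Real.sqrt (A + u ^ 2)))) u := by
  have hs : HasDerivAt (fun v : ℝ => R - Real.sqrt (A + v ^ 2))
      (-(u / Real.sqrt (A + u ^ 2))) u :=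
    (hasDerivAt_rc A u hA.ne').const_sub R
  exact ((hasDerivAt_W0 α c R hR (r_pos _ hz) (q_pos' _ hz) (sq_add_sq_pos _ hz).ne').comp u hs :)

lemma hasDerivAt_X1 {A u : ℝ} (hR : R ≠ 0) (hz : z ≠ 0) (hA : 0 < A + u ^ 2) :
    HasDerivAt (fun v => W1f α c R z (R - Real.sqrt (A + v ^ 2)) *
        (-(v / Real.sqrt (A + v ^ 2))))
      (W2f α c R z (R - Real.sqrt (A + u ^ 2)) * (u / Real.sqrt (A + u ^ 2)) ^ 2
        + W1f α c R z (R - Real.sqrt (A + u ^ 2)) *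
          ((u ^ 2 / Real.sqrt (A + u ^ 2) - Real.sqrt (A + u ^ 2)) /
            Real.sqrt (A + u ^ 2) ^ 2)) u := by
  have hρ : 0 < Real.sqrt (A + u ^ 2) := Real.sqrt_pos.2 hA
  have hs : HasDerivAt (fun v : ℝ => R - Real.sqrt (A + v ^ 2))
      (-(u / Real.sqrt (A + u ^ 2))) u :=
    (hasDerivAt_rc A u hA.ne').const_sub R
  have h1 := (hasDerivAt_W1 α c R hR (z := z) (t := R - Real.sqrt (A + u ^ 2))
      (r_pos _ hz) (q_pos' _ hz) (sq_add_sq_pos _ hz).ne').comp u hs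
  have h2 : HasDerivAt (fun v : ℝ => -(v / Real.sqrt (A + v ^ 2)))
      (-((1 * Real.sqrt (A + u ^ 2) - u * (u / Real.sqrt (A + u ^ 2))) /
        Real.sqrt (A + u ^ 2) ^ 2)) u :=
    ((hasDerivAt_id u).div (hasDerivAt_rc A u hA.ne') hρ.ne').neg
  have h3 := h1.mul h2
  refine h3.congr_deriv ?_
  symm
  simp only [Function.comp_apply]
  field_simp
  ring

end W
end Aux

set_option maxHeartbeats 2000000 in
lemma final_ineq (α c R z ρ w S t : ℝ)
    (hα0 : 0 < α) (hc : 0 ≤ c) (hz : z ≠ 0)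
    (hρ : 0 < ρ) (hR : 0 < R)
    (ht : t = R - ρ)
    (hS : S = ρ ^ 2 - w ^ 2)
    (hkey : c * Real.sqrt (t ^ 2 + z ^ 2) + α * (2 + c) * t ≤ α * R) :
    0 ≤ (W2f α c R z t * (S / ρ ^ 2) + W1f α c R z t * ((S / ρ - c * ρ) / ρ ^ 2))
      + (W2f α c R z t * (w / ρ) ^ 2 + W1f α c R z t * ((w ^ 2 / ρ - ρ) / ρ ^ 2))
      + Z2f α c R t z + (1 - 2 * α) * Z1f α c R t z / z := by
  subst ht hS
  set t := R - ρ with htdef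
  have hrpos := r_pos t hz
  have hq1 := q_pos t hz
  have hq2 : ((Real.sqrt (t ^ 2 + z ^ 2) + t) / 2) ≠ 0 := hq1.ne'
  have hr2 : (Real.sqrt (t ^ 2 + z ^ 2)) ^ 2 = t ^ 2 + z ^ 2 :=
    Real.sq_sqrt (by positivity)
  simp only [W1f, W2f, Z1f, Z2f]
  rw [show α - 2 = α - 1 - 1 from by ring, Real.rpow_sub_one hq2, Real.rpow_sub_one hq2]
  set r := Real.sqrt (t ^ 2 + z ^ 2) with hrdef
  have hz2 : z ^ 2 = r ^ 2 - t ^ 2 := by linarith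
  set P := ((r + t) / 2) ^ α with hPdef
  have hPpos : 0 < P := Real.rpow_pos_of_pos hq1 α
  have hrt : r + t ≠ 0 := by intro h; rw [h] at hq1; simp at hq1
  have e1 : (1 - 2 * α) * (α * (P / ((r + t) / 2)) * (z / (2 * r)) * (c * t / R + 1)) / z
      = (1 - 2 * α) * (α * (P / ((r + t) / 2)) * (c * t / R + 1)) / (2 * r) := by
    rw [div_eq_div_iff hz (by positivity : (2:ℝ) * r ≠ 0)]
    field_simp
  rw [e1, hz2]
  have key2 : 0 ≤ (c * P / (r * R * ρ)) * (α * (R - (2 + c) * t) - c * r) := by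
    apply mul_nonneg (by positivity)
    nlinarith [hkey]
  refine le_trans key2 (le_of_eq ?_)
  have hrne := hrpos.ne'
  field_simp
  ring

set_option maxHeartbeats 1000000 in
/-- For `R` large (depending on `n = m+1` and `α`), `v_R` is a subsolution of
the weighted equation `Δ v + β v_z/z ≥ 0` on `B₂ ∖ {z = 0}` where `v_R > 0`. -/
theorem stmt_14 (m : ℕ) (α β : ℝ) (hα : α ∈ Set.Ioo (0 : ℝ) 1)
    (hβ : β = 1 - 2 * α) :
    ∃ R₀ : ℝ, ∀ R : ℝ, R₀ ≤ R →
      ∀ p : (Fin m → ℝ) × ℝ × ℝ,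
        (∑ i, p.1 i ^ 2) + p.2.1 ^ 2 + p.2.2 ^ 2 < 4 → p.2.2 ≠ 0 →
        0 < vR α m R p →
        0 ≤ (∑ i, qxx (vR α m R) i p) + qnn (vR α m R) p + qzz (vR α m R) p +
            β * qz (vR α m R) p / p.2.2 := by
  obtain ⟨hα0, hα1⟩ := hα
  subst hβ
  refine ⟨100 * (1 + (m : ℝ)) / α, fun R hRR p hball hz _ => ?_⟩
  obtain ⟨x, y, z⟩ := p
  simp only at hball hz ⊢
  -- basic bounds
  have hm0 : (0:ℝ) ≤ (m:ℝ) := Nat.cast_nonneg m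
  have hS0 : 0 ≤ ∑ i, x i ^ 2 := Finset.sum_nonneg fun i _ => sq_nonneg _
  have hy2 : y ^ 2 < 4 := by nlinarith [sq_nonneg z]
  have hz4 : z ^ 2 < 4 := by nlinarith [sq_nonneg y]
  have hS4 : (∑ i, x i ^ 2) < 4 := by nlinarith [sq_nonneg y, sq_nonneg z]
  have hR100 : (100:ℝ) ≤ R := by
    refine le_trans ?_ hRR
    rw [le_div_iff₀ hα0]
    nlinarith
  have hRpos : (0:ℝ) < R := by linarith
  have hRne : R ≠ 0 := hRpos.ne'
  have hy : y < 2 := by nlinarith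
  have hyR : y < R := by linarith
  have hyRne : y - R ≠ 0 := sub_ne_zero.2 (ne_of_lt hyR)
  have hwpos : 0 < (y - R) ^ 2 := by positivity
  set S := ∑ i, x i ^ 2 with hSdef
  set ρ := Real.sqrt (S + (y - R) ^ 2) with hρdef
  set t := R - ρ with htdef
  have hρpos : 0 < ρ := Real.sqrt_pos.2 (by nlinarith)
  have hρ2 : ρ ^ 2 = S + (y - R) ^ 2 := Real.sq_sqrt (by nlinarith)
  have hρub : ρ ≤ R + 3 := by
    rw [hρdef]
    calc Real.sqrt (S + (y - R) ^ 2) ≤ Real.sqrt ((R + 3) ^ 2) :=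
          Real.sqrt_le_sqrt (by nlinarith)
      _ = R + 3 := Real.sqrt_sq (by linarith)
  have hρlb : R - 2 ≤ ρ := by
    have h1 : Real.sqrt ((y - R) ^ 2) ≤ ρ := by
      rw [hρdef]; exact Real.sqrt_le_sqrt (by linarith)
    rw [Real.sqrt_sq_eq_abs] at h1
    have h2 : R - y ≤ |y - R| := by
      rw [abs_sub_comm]; exact le_abs_self _
    linarith
  have ht_ub : t ≤ 2 := by rw [htdef]; linarith
  have ht_lb : (-3:ℝ) ≤ t := by rw [htdef]; linarith
  have hrub : Real.sqrt (t ^ 2 + z ^ 2) ≤ 4 := by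
    calc Real.sqrt (t ^ 2 + z ^ 2) ≤ Real.sqrt (4 ^ 2) :=
          Real.sqrt_le_sqrt (by nlinarith)
      _ = 4 := Real.sqrt_sq (by norm_num)
  have hkey : (m:ℝ) * Real.sqrt (t ^ 2 + z ^ 2) + α * (2 + (m:ℝ)) * t ≤ α * R := by
    have hαR : 100 * (1 + (m:ℝ)) ≤ α * R := by
      have h1 := mul_le_mul_of_nonneg_left hRR hα0.le
      rwa [mul_div_cancel₀ _ hα0.ne'] at h1
    have h2 : (m:ℝ) * Real.sqrt (t ^ 2 + z ^ 2) ≤ (m:ℝ) * 4 :=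
      mul_le_mul_of_nonneg_left hrub hm0
    have h3 : α * (2 + (m:ℝ)) * t ≤ α * (2 + (m:ℝ)) * 2 :=
      mul_le_mul_of_nonneg_left ht_ub (by positivity)
    have h4 : α * (2 + (m:ℝ)) * 2 ≤ (2 + (m:ℝ)) * 2 := by nlinarith
    linarith
  -- the z-direction function
  have hfz : (fun s => vR α m R (x, y, s))
      = fun s => ((Real.sqrt (t ^ 2 + s ^ 2) + t) / 2) ^ α * ((m:ℝ) * t / R + 1) := by
    funext s
    rw [htdef, hρdef, hSdef]
    simp only [vR, VV, UU_eq]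
    push_cast
    ring
  -- qz
  have hqz : qz (vR α m R) (x, y, z) = Z1f α (m:ℝ) R t z := by
    simp only [qz]
    rw [hfz]
    exact (hasDerivAt_Z0 α (m:ℝ) R t (r_pos t hz) (q_pos' t hz)
      (sq_add_sq_pos t hz).ne').deriv
  -- qzz
  have hqzz : qzz (vR α m R) (x, y, z) = Z2f α (m:ℝ) R t z := by
    simp only [qzz]
    have hev : (fun s => deriv (fun u => vR α m R (x, y, u)) s) =ᶠ[nhds z]
        (fun s => α * ((Real.sqrt (t ^ 2 + s ^ 2) + t) / 2) ^ (α - 1) *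
          (s / (2 * Real.sqrt (t ^ 2 + s ^ 2))) * ((m:ℝ) * t / R + 1)) := by
      filter_upwards [isOpen_ne.mem_nhds hz] with s hs
      rw [hfz]
      exact (hasDerivAt_Z0 α (m:ℝ) R t (r_pos t hs) (q_pos' t hs)
        (sq_add_sq_pos t hs).ne').deriv
    rw [hev.deriv_eq]
    exact (hasDerivAt_Z1 α (m:ℝ) R t (r_pos t hz) (q_pos' t hz)
      (sq_add_sq_pos t hz).ne').deriv
  -- qxx for each i
  have hxx : ∀ i, qxx (vR α m R) i (x, y, z)
      = W2f α (m:ℝ) R z t * (x i / ρ) ^ 2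
        + W1f α (m:ℝ) R z t * ((x i ^ 2 / ρ - ρ) / ρ ^ 2) := by
    intro i
    have hA0 : 0 ≤ ∑ j ∈ Finset.univ \ {i}, x j ^ 2 :=
      Finset.sum_nonneg fun j _ => sq_nonneg _
    set A := (∑ j ∈ Finset.univ \ {i}, x j ^ 2) + (y - R) ^ 2 with hAdef
    have hApos : 0 < A := by rw [hAdef]; linarith
    have hupd : ∀ u : ℝ, ((∑ j, Function.update x i u j ^ 2) + (y - R) ^ 2) = A + u ^ 2 := by
      intro u
      have h1 : (fun j => Function.update x i u j ^ 2)
          = Function.update (fun j => x j ^ 2) i (u ^ 2) := by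
        funext j
        rcases eq_or_ne j i with rfl | hj
        · simp
        · simp [Function.update_of_ne hj]
      have h2 : (∑ j, Function.update x i u j ^ 2)
          = u ^ 2 + ∑ j ∈ Finset.univ \ {i}, x j ^ 2 := by
        rw [show (∑ j, Function.update x i u j ^ 2)
            = ∑ j, Function.update (fun j => x j ^ 2) i (u ^ 2) j from
          Finset.sum_congr rfl fun j _ => congrFun h1 j]
        exact Finset.sum_update_of_mem (Finset.mem_univ i) (fun j => x j ^ 2) (u ^ 2)
      rw [h2, hAdef]; ring
    have hAx : A + (x i) ^ 2 = S + (y - R) ^ 2 := by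
      have h3 := hupd (x i)
      rw [Function.update_eq_self] at h3
      rw [hSdef]; linarith
    have hfun : (fun u => vR α m R (Function.update x i u, y, z))
        = fun u => W0f α (m:ℝ) R z (R - Real.sqrt (A + u ^ 2)) := by
      funext u
      simp only [vR, VV, UU_eq, W0f]
      rw [hupd u]
      push_cast
      ring
    have hd1 : (fun s => deriv (fun u => vR α m R (Function.update x i u, y, z)) s)
        = fun s => W1f α (m:ℝ) R z (R - Real.sqrt (A + s ^ 2)) *
            (-(s / Real.sqrt (A + s ^ 2))) := by
      funext s
      rw [hfun]
      exact (hasDerivAt_X0 α (m:ℝ) R z hRne hz (by positivity)).deriv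
    simp only [qxx]
    rw [hd1]
    have h4 := (hasDerivAt_X1 α (m:ℝ) R z hRne hz (A := A) (u := x i) (by positivity)).deriv
    rw [hAx] at h4
    rw [h4, ← hρdef, ← htdef]
  -- sum of qxx
  have hsum : (∑ i, qxx (vR α m R) i (x, y, z))
      = W2f α (m:ℝ) R z t * (S / ρ ^ 2)
        + W1f α (m:ℝ) R z t * ((S / ρ - (m:ℝ) * ρ) / ρ ^ 2) := by
    rw [Finset.sum_congr rfl fun i _ => hxx i]
    rw [Finset.sum_add_distrib, ← Finset.mul_sum, ← Finset.mul_sum]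
    congr 1
    · congr 1
      simp only [div_pow]
      rw [← Finset.sum_div, ← hSdef]
    · congr 1
      rw [← Finset.sum_div, Finset.sum_sub_distrib, ← Finset.sum_div, ← hSdef,
        Finset.sum_const, Finset.card_univ, Fintype.card_fin, nsmul_eq_mul]
  -- qnn
  have hqnn : qnn (vR α m R) (x, y, z)
      = W2f α (m:ℝ) R z t * ((y - R) / ρ) ^ 2
        + W1f α (m:ℝ) R z t * (((y - R) ^ 2 / ρ - ρ) / ρ ^ 2) := by
    simp only [qnn]
    have hfn : (fun u : ℝ => vR α m R (x, u, z))
        = fun u => W0f α (m:ℝ) R z (R - Real.sqrt (S + (u - R) ^ 2)) := by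
      funext u
      simp only [vR, VV, UU_eq, W0f]
      rw [hSdef]
      push_cast
      ring
    have hev : (fun s => deriv (fun u => vR α m R (x, u, z)) s) =ᶠ[nhds y]
        (fun s => W1f α (m:ℝ) R z (R - Real.sqrt (S + (s - R) ^ 2)) *
          (-((s - R) / Real.sqrt (S + (s - R) ^ 2)))) := by
      filter_upwards [Iio_mem_nhds hyR] with s hs
      rw [hfn]
      have hpos : 0 < S + (s - R) ^ 2 := by
        have : 0 < (s - R) ^ 2 := by
          have : s - R ≠ 0 := sub_ne_zero.2 (ne_of_lt hs)
          positivity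
        linarith
      have hcomp := (hasDerivAt_X0 α (m:ℝ) R z hRne hz (A := S) (u := s - R)
        hpos).comp s ((hasDerivAt_id s).sub_const R)
      simpa [Function.comp_def] using hcomp.deriv
    rw [hev.deriv_eq]
    have hpos : 0 < S + (y - R) ^ 2 := by linarith
    have h2 := ((hasDerivAt_X1 α (m:ℝ) R z hRne hz (A := S) (u := y - R)
      hpos).comp y ((hasDerivAt_id y).sub_const R)).deriv
    rw [mul_one] at h2
    rw [← hρdef, ← htdef] at h2
    exact h2
  -- assemble
  rw [hsum, hqnn, hqzz, hqz]
  have hfin := final_ineq α (m:ℝ) R z ρ (y - R) S t hα0 hm0 hz hρpos hRpos htdef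
    (by rw [hSdef]; linarith) hkey
  linarith [hfin]
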